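/- (Srivastava–Niukkanen integral representation.) Let $k \geq 1$, $\alpha_1,\dots,\alpha_k > -1$, $\beta > -1$, $n_1,\dots,n_k \in \mathbb{Z}_{\geq 0}$, and $x_1,\dots,x_k \in \mathbb{R}$. Then $L^{(\alpha_1+\cdots+\alpha_k+\beta+k)}_{n_1,\dots,n_k}(x_1,\dots,x_k) = \dfrac{(\alpha_1+\cdots+\alpha_k+\beta+k+1)_{n_1+\cdots+n_k}}{(\alpha_1+1)_{n_1}\cdots(\alpha_k+1)_{n_k}} \int_{E_k} \prod_{j=1}^{k} L_{n_j}^{(\alpha_j)}(x_j u_j)\, d\mu_{(\alpha_1+1,\dots,\alpha_k+1,\beta+1)}(\mathbf{u})$. -/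

import Mathlib

open scoped BigOperators
open MeasureTheory Set
open scoped ENNReal

/-- The rising factorial (Pochhammer symbol) `(a)_m = a (a+1) ⋯ (a+m-1)`. -/
noncomputable def risingFactorial (a : ℝ) (m : ℕ) : ℝ := (ascPochhammer ℝ m).eval a

/-- The classical Laguerre polynomial `L_n^{(α)}(x)`. -/
noncomputable def laguerreP (n : ℕ) (α : ℝ) (x : ℝ) : ℝ :=
  risingFactorial (α + 1) n / (Nat.factorial n : ℝ) *
    ∑ j ∈ Finset.range (n + 1),
      risingFactorial (-(n : ℝ)) j / risingFactorial (α + 1) j * x ^ j / (Nat.factorial j : ℝ)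

/-- Erdélyi's multivariate Laguerre polynomial `L_{n_1,…,n_k}^{(α)}(x_1,…,x_k)`. -/
noncomputable def mvLaguerre (k : ℕ) (α : ℝ) (n : Fin k → ℕ) (x : Fin k → ℝ) : ℝ :=
  risingFactorial (α + 1) (∑ i, n i) / (∏ i, (Nat.factorial (n i) : ℝ)) *
    ∑ j ∈ Fintype.piFinset (fun i => Finset.range (n i + 1)),
      (∏ i, risingFactorial (-(n i : ℝ)) (j i)) / risingFactorial (α + 1) (∑ i, j i) *
        ∏ i, x i ^ (j i) / (Nat.factorial (j i) : ℝ)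

/-- The confluent Lauricella function `Φ₂^{(k)}[b₁,…,b_k; c; x₁,…,x_k]`. -/
noncomputable def Phi2 (k : ℕ) (b : Fin k → ℝ) (c : ℝ) (x : Fin k → ℝ) : ℝ :=
  ∑' j : Fin k → ℕ,
    (∏ i, risingFactorial (b i) (j i)) / risingFactorial c (∑ i, j i) *
      ∏ i, x i ^ (j i) / (Nat.factorial (j i) : ℝ)

/-- The confluent hypergeometric function `₁F₁[a; c; x]`. -/
noncomputable def oneF1 (a c x : ℝ) : ℝ :=
  ∑' j : ℕ, risingFactorial a j / risingFactorial c j * x ^ j / (Nat.factorial j : ℝ)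

/-- Rooney's constant `q_n = √((2n)!) / (2^{n+1/2} n!)`. -/
noncomputable def qSeq (n : ℕ) : ℝ :=
  Real.sqrt (Nat.factorial (2 * n) : ℝ) /
    ((2 : ℝ) ^ ((n : ℝ) + 1 / 2) * (Nat.factorial n : ℝ))

/-- The open standard simplex `E_k ⊆ ℝ^k`. -/
def simplexE (k : ℕ) : Set (Fin k → ℝ) := {u | (∀ i, 0 < u i) ∧ ∑ i, u i < 1}

/-- The density of the Dirichlet measure `μ_{(b₁,…,b_k,β)}` with respect to
Lebesgue measure on the simplex `E_k`. -/
noncomputable def dirichletDensity (k : ℕ) (b : Fin k → ℝ) (β : ℝ) (u : Fin k → ℝ) : ℝ :=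
  Real.Gamma (∑ i, b i + β) / ((∏ i, Real.Gamma (b i)) * Real.Gamma β) *
    (∏ i, u i ^ (b i - 1)) * (1 - ∑ i, u i) ^ (β - 1)


lemma risingFactorial_zero (a : ℝ) : risingFactorial a 0 = 1 := by
  simp [risingFactorial]

lemma risingFactorial_succ (a : ℝ) (m : ℕ) :
    risingFactorial a (m + 1) = risingFactorial a m * (a + m) := by
  simp [risingFactorial, ascPochhammer_succ_right]

lemma risingFactorial_pos {a : ℝ} (ha : 0 < a) (m : ℕ) : 0 < risingFactorial a m := by
  induction m with
  | zero => simp [risingFactorial_zero]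
  | succ m ih => rw [risingFactorial_succ]; positivity

lemma Gamma_add_nat {a : ℝ} (ha : 0 < a) (m : ℕ) :
    Real.Gamma (a + m) = Real.Gamma a * risingFactorial a m := by
  induction m with
  | zero => simp [risingFactorial_zero]
  | succ m ih =>
      have h : a + (m + 1 : ℕ) = (a + m) + 1 := by push_cast; ring
      rw [h, Real.Gamma_add_one (by positivity), ih, risingFactorial_succ]; ring

lemma beta_integrableOn {a b : ℝ} (ha : 0 < a) (hb : 0 < b) :
    IntegrableOn (fun x : ℝ => x ^ (a - 1) * (1 - x) ^ (b - 1)) (Ioc 0 1) := by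
  have h := (Complex.betaIntegral_convergent (u := (a : ℂ)) (v := (b : ℂ))
    (by simpa using ha) (by simpa using hb)).1
  have h2 : IntegrableOn
      (fun x : ℝ => ((x : ℂ) ^ ((a : ℂ) - 1) * ((1 : ℂ) - x) ^ ((b : ℂ) - 1)).re)
      (Ioc 0 1) := h.re
  refine h2.congr_fun (fun x hx => ?_) measurableSet_Ioc
  have hx0 : (0:ℝ) ≤ x := le_of_lt hx.1
  have hx1 : (0:ℝ) ≤ 1 - x := by linarith [hx.2]
  have e1 : ((x : ℂ) ^ ((a : ℂ) - 1)) = ((x ^ (a - 1) : ℝ) : ℂ) := by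
    rw [Complex.ofReal_cpow hx0]; push_cast; ring_nf
  have e2 : (((1 : ℂ) - x) ^ ((b : ℂ) - 1)) = (((1 - x) ^ (b - 1) : ℝ) : ℂ) := by
    rw [Complex.ofReal_cpow hx1]; push_cast; ring_nf
  beta_reduce
  rw [e1, e2, ← Complex.ofReal_mul, Complex.ofReal_re]

lemma beta_integral {a b : ℝ} (ha : 0 < a) (hb : 0 < b) :
    ∫ x in Ioc (0:ℝ) 1, x ^ (a - 1) * (1 - x) ^ (b - 1)
      = Real.Gamma a * Real.Gamma b / Real.Gamma (a + b) := by
  have hC : Complex.betaIntegral a b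
      = ((Real.Gamma a * Real.Gamma b / Real.Gamma (a + b) : ℝ) : ℂ) := by
    have h := Complex.Gamma_mul_Gamma_eq_betaIntegral (s := (a:ℂ)) (t := (b:ℂ))
      (by simpa using ha) (by simpa using hb)
    have hG : Complex.Gamma ((a:ℂ) + b) ≠ 0 := by
      rw [show ((a:ℂ) + b) = ((a + b : ℝ) : ℂ) by push_cast; ring, Complex.Gamma_ofReal]
      exact_mod_cast (Real.Gamma_pos_of_pos (by linarith)).ne'
    have hc : Complex.betaIntegral a b
        = Complex.Gamma a * Complex.Gamma b / Complex.Gamma ((a:ℂ) + b) := by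
      rw [eq_div_iff hG]; linear_combination -h
    rw [hc, show ((a:ℂ) + b) = ((a + b : ℝ) : ℂ) by norm_cast]
    simp only [Complex.Gamma_ofReal]
    norm_cast
  have hI : Complex.betaIntegral a b
      = ∫ x in Ioc (0:ℝ) 1, (x : ℂ) ^ ((a : ℂ) - 1) * ((1 : ℂ) - x) ^ ((b : ℂ) - 1) := by
    rw [Complex.betaIntegral, intervalIntegral.integral_of_le (by norm_num)]
  have h := (Complex.betaIntegral_convergent (u := (a : ℂ)) (v := (b : ℂ))
    (by simpa using ha) (by simpa using hb)).1
  calc ∫ x in Ioc (0:ℝ) 1, x ^ (a - 1) * (1 - x) ^ (b - 1)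
      = ∫ x in Ioc (0:ℝ) 1, ((x : ℂ) ^ ((a : ℂ) - 1) * ((1 : ℂ) - x) ^ ((b : ℂ) - 1)).re := by
        refine setIntegral_congr_fun measurableSet_Ioc (fun x hx => ?_)
        have hx0 : (0:ℝ) ≤ x := le_of_lt hx.1
        have hx1 : (0:ℝ) ≤ 1 - x := by linarith [hx.2]
        have e1 : ((x : ℂ) ^ ((a : ℂ) - 1)) = ((x ^ (a - 1) : ℝ) : ℂ) := by
          rw [Complex.ofReal_cpow hx0]; push_cast; ring_nf
        have e2 : (((1 : ℂ) - x) ^ ((b : ℂ) - 1)) = (((1 - x) ^ (b - 1) : ℝ) : ℂ) := by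
          rw [Complex.ofReal_cpow hx1]; push_cast; ring_nf
        rw [e1, e2, ← Complex.ofReal_mul, Complex.ofReal_re]
    _ = (∫ x in Ioc (0:ℝ) 1, (x : ℂ) ^ ((a : ℂ) - 1) * ((1 : ℂ) - x) ^ ((b : ℂ) - 1)).re := by
        simpa using integral_re h
    _ = Real.Gamma a * Real.Gamma b / Real.Gamma (a + b) := by
        rw [← hI, hC, Complex.ofReal_re]


lemma beta_lintegral {a b : ℝ} (ha : 0 < a) (hb : 0 < b) :
    ∫⁻ x in Ioo (0:ℝ) 1, ENNReal.ofReal (x ^ (a - 1) * (1 - x) ^ (b - 1))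
      = ENNReal.ofReal (Real.Gamma a * Real.Gamma b / Real.Gamma (a + b)) := by
  rw [← MeasureTheory.ofReal_integral_eq_lintegral_ofReal
    ((beta_integrableOn ha hb).mono_set Ioo_subset_Ioc_self)
    ((ae_restrict_iff' measurableSet_Ioo).2 (Filter.Eventually.of_forall (fun x hx => by
      have : (0:ℝ) ≤ x := hx.1.le
      have : (0:ℝ) ≤ 1 - x := by linarith [hx.2]
      positivity)))]
  rw [← integral_Ioc_eq_integral_Ioo, beta_integral ha hb]

lemma measurable_rpow_const (c : ℝ) : Measurable fun x : ℝ => x ^ c := by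
  have h : (fun x : ℝ => x ^ c) = fun x =>
      if x = 0 then (if c = 0 then 1 else 0)
      else if 0 < x then Real.exp (Real.log x * c)
      else Real.exp (Real.log x * c) * Real.cos (c * Real.pi) := by
    ext x
    rcases lt_trichotomy x 0 with hx | rfl | hx
    · rw [if_neg hx.ne, if_neg (not_lt.2 hx.le), Real.rpow_def_of_neg hx]
    · rcases eq_or_ne c 0 with rfl | hc
      · simp
      · simp [Real.zero_rpow hc, hc]
    · rw [if_neg hx.ne', if_pos hx, Real.rpow_def_of_pos hx]
  rw [h]
  exact Measurable.ite (measurableSet_eq) measurable_const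
    (Measurable.ite measurableSet_Ioi ((Real.measurable_log.mul measurable_const).exp)
      (((Real.measurable_log.mul measurable_const).exp).mul measurable_const))

lemma beta_meas (a b L : ℝ) :
    Measurable (fun t : ℝ => ENNReal.ofReal (t ^ (a - 1) * (L - t) ^ (b - 1))) := by
  apply ENNReal.measurable_ofReal.comp
  exact (measurable_rpow_const (a-1)).mul ((measurable_rpow_const (b-1)).comp
    (measurable_const.sub measurable_id))

lemma beta_lintegral_scaled {a b L : ℝ} (ha : 0 < a) (hb : 0 < b) (hL : 0 < L) :
    ∫⁻ t in Ioo (0:ℝ) L, ENNReal.ofReal (t ^ (a - 1) * (L - t) ^ (b - 1))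
      = ENNReal.ofReal (L ^ (a + b - 1) *
          (Real.Gamma a * Real.Gamma b / Real.Gamma (a + b))) := by
  have hmap : Measure.map (fun x : ℝ => L * x) volume = ENNReal.ofReal |L⁻¹| • volume :=
    Real.map_volume_mul_left hL.ne'
  have hvol : (volume : Measure ℝ)
      = ENNReal.ofReal L • Measure.map (fun x : ℝ => L * x) volume := by
    rw [hmap, smul_smul, abs_of_pos (inv_pos.2 hL), ← ENNReal.ofReal_mul hL.le,
      mul_inv_cancel₀ hL.ne', ENNReal.ofReal_one, one_smul]
  have hpre : (fun x : ℝ => L * x) ⁻¹' Ioo 0 L = Ioo 0 1 := by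
    ext x
    simp only [mem_preimage, mem_Ioo]
    constructor
    · rintro ⟨h1, h2⟩
      rcases mul_pos_iff.1 h1 with h | h
      · exact ⟨h.2, by nlinarith⟩
      · linarith [h.1]
    · rintro ⟨h1, h2⟩
      exact ⟨by positivity, by nlinarith⟩
  calc ∫⁻ t in Ioo (0:ℝ) L, ENNReal.ofReal (t ^ (a - 1) * (L - t) ^ (b - 1)) ∂volume
      = ENNReal.ofReal L * ∫⁻ t in Ioo (0:ℝ) L, ENNReal.ofReal (t ^ (a - 1) * (L - t) ^ (b - 1))
          ∂(Measure.map (fun x : ℝ => L * x) volume) := by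
        conv_lhs => rw [hvol]
        rw [Measure.restrict_smul, lintegral_smul_measure, smul_eq_mul]
    _ = ENNReal.ofReal L * ∫⁻ x in Ioo (0:ℝ) 1,
          ENNReal.ofReal ((L * x) ^ (a - 1) * (L - L * x) ^ (b - 1)) := by
        rw [setLIntegral_map measurableSet_Ioo (beta_meas a b L) (measurable_const_mul L), hpre]
    _ = ENNReal.ofReal L * ∫⁻ x in Ioo (0:ℝ) 1,
          ENNReal.ofReal (L ^ (a + b - 2)) * ENNReal.ofReal (x ^ (a - 1) * (1 - x) ^ (b - 1)) := by
        congr 1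
        refine setLIntegral_congr_fun measurableSet_Ioo
          (fun x hx => ?_)
        have hx0 : (0:ℝ) < x := hx.1
        have hx1 : (0:ℝ) < 1 - x := by linarith [hx.2]
        rw [← ENNReal.ofReal_mul (by positivity)]
        congr 1
        have e1 : (L * x) ^ (a - 1) = L ^ (a - 1) * x ^ (a - 1) :=
          Real.mul_rpow hL.le hx0.le
        have e2 : (L - L * x) ^ (b - 1) = L ^ (b - 1) * (1 - x) ^ (b - 1) := by
          rw [show L - L * x = L * (1 - x) by ring]; exact Real.mul_rpow hL.le hx1.le
        rw [e1, e2, show a + b - 2 = (a - 1) + (b - 1) by ring, Real.rpow_add hL]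
        ring
    _ = ENNReal.ofReal L * (ENNReal.ofReal (L ^ (a + b - 2)) *
          ENNReal.ofReal (Real.Gamma a * Real.Gamma b / Real.Gamma (a + b))) := by
        rw [lintegral_const_mul' _ _ ENNReal.ofReal_ne_top, beta_lintegral ha hb]
    _ = ENNReal.ofReal (L ^ (a + b - 1) *
          (Real.Gamma a * Real.Gamma b / Real.Gamma (a + b))) := by
        rw [← mul_assoc, ← ENNReal.ofReal_mul hL.le, ← ENNReal.ofReal_mul (by positivity)]
        have : L * L ^ (a + b - 2) = L ^ (a + b - 1) := by
          rw [show L ^ (a + b - 1) = L ^ (1 + (a + b - 2)) by ring_nf,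
            Real.rpow_add hL, Real.rpow_one]
        rw [this]


lemma measurableSet_simplexE (k : ℕ) : MeasurableSet (simplexE k) := by
  have h1 : MeasurableSet {u : Fin k → ℝ | ∀ i, 0 < u i} := by
    rw [show {u : Fin k → ℝ | ∀ i, 0 < u i} = ⋂ i, {u | 0 < u i} by ext; simp]
    exact MeasurableSet.iInter fun i =>
      measurableSet_lt measurable_const (measurable_pi_apply i)
  have h2 : MeasurableSet {u : Fin k → ℝ | ∑ i, u i < 1} :=
    measurableSet_lt (Finset.measurable_sum _ fun i _ => measurable_pi_apply i) measurable_const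
  exact h1.inter h2

lemma measurable_dirF (k : ℕ) (c : Fin k → ℝ) (d : ℝ) :
    Measurable fun u : Fin k → ℝ =>
      ENNReal.ofReal ((∏ i, u i ^ (c i - 1)) * (1 - ∑ i, u i) ^ (d - 1)) := by
  apply ENNReal.measurable_ofReal.comp
  exact (Finset.measurable_prod _ fun i _ =>
    (measurable_rpow_const (c i - 1)).comp (measurable_pi_apply i)).mul
    ((measurable_rpow_const (d - 1)).comp
      (measurable_const.sub (Finset.measurable_sum _ fun i _ => measurable_pi_apply i)))

lemma dirichlet_lintegral : ∀ {k : ℕ} (c : Fin k → ℝ), (∀ i, 0 < c i) → ∀ {d : ℝ}, 0 < d →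
    ∫⁻ u in simplexE k, ENNReal.ofReal ((∏ i, u i ^ (c i - 1)) * (1 - ∑ i, u i) ^ (d - 1))
      = ENNReal.ofReal ((∏ i, Real.Gamma (c i)) * Real.Gamma d / Real.Gamma (∑ i, c i + d)) := by
  intro k
  induction k with
  | zero =>
      intro c hc d hd
      have hs : simplexE 0 = univ := by
        ext u; simp [simplexE]
      rw [hs, Measure.restrict_univ]
      simp only [Finset.univ_eq_empty, Finset.prod_empty, Finset.sum_empty, one_mul,
        Real.one_rpow, sub_zero, zero_add]
      rw [lintegral_const]
      have : (volume : Measure (Fin 0 → ℝ)) univ = 1 := by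
        rw [MeasureTheory.volume_pi, Measure.pi_univ]; simp
      rw [this, mul_one, div_self (Real.Gamma_pos_of_pos hd).ne']
  | succ k ih =>
      intro c hc d hd
      set e := MeasurableEquiv.piFinSuccAbove (fun _ : Fin (k+1) => ℝ) 0 with he
      have hmp : MeasurePreserving e.symm
          ((volume : Measure ℝ).prod (volume : Measure (Fin k → ℝ)))
          (volume : Measure (Fin (k+1) → ℝ)) :=
        (volume_preserving_piFinSuccAbove (fun _ : Fin (k+1) => ℝ) 0).symm e
      set F : (Fin (k+1) → ℝ) → ℝ≥0∞ := fun u =>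
        ENNReal.ofReal ((∏ i, u i ^ (c i - 1)) * (1 - ∑ i, u i) ^ (d - 1)) with hF
      have hFmeas : Measurable F := measurable_dirF (k+1) c d
      have hsymm : ∀ p : ℝ × (Fin k → ℝ), e.symm p = Fin.cons p.1 p.2 := by
        intro p
        show (Fin.insertNthEquiv (fun _ : Fin (k+1) => ℝ) 0) p = _
        simp [Fin.insertNthEquiv, Fin.insertNth_zero']
      set S : Set (ℝ × (Fin k → ℝ)) :=
        {p | p.2 ∈ simplexE k ∧ p.1 ∈ Ioo 0 (1 - ∑ i, p.2 i)} with hSdef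
      have hpre : e.symm ⁻¹' simplexE (k+1) = S := by
        ext p
        simp only [mem_preimage, hsymm, simplexE, mem_setOf_eq, hSdef, mem_Ioo,
          Fin.forall_fin_succ, Fin.cons_zero, Fin.cons_succ, Fin.sum_univ_succ]
        constructor
        · rintro ⟨⟨h0, hs⟩, hsum⟩
          have hsum2 : ∑ i, p.2 i < 1 := by linarith
          exact ⟨⟨hs, hsum2⟩, h0, by linarith⟩
        · rintro ⟨⟨hs, hsum2⟩, h0, h1⟩
          exact ⟨⟨h0, hs⟩, by linarith⟩
      have hS : MeasurableSet S := by
        rw [← hpre]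
        exact e.symm.measurable (measurableSet_simplexE (k+1))
      have step1 : ∫⁻ u in simplexE (k+1), F u = ∫⁻ p in S, F (e.symm p)
          ∂((volume : Measure ℝ).prod (volume : Measure (Fin k → ℝ))) := by
        rw [← hmp.setLIntegral_comp_preimage_emb e.symm.measurableEmbedding, hpre]
      rw [step1]
      have hGmeas : Measurable fun p : ℝ × (Fin k → ℝ) => F (e.symm p) :=
        hFmeas.comp e.symm.measurable
      rw [← lintegral_indicator hS]
      rw [lintegral_prod_symm _ ((hGmeas.indicator hS).aemeasurable)]
      have inner_eq : ∀ v : Fin k → ℝ,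
          (∫⁻ t, S.indicator (fun p => F (e.symm p)) (t, v))
            = (simplexE k).indicator (fun v =>
                ∫⁻ t in Ioo 0 (1 - ∑ i, v i), F (e.symm (t, v))) v := by
        intro v
        by_cases hv : v ∈ simplexE k
        · rw [indicator_of_mem hv, ← lintegral_indicator measurableSet_Ioo]
          congr 1
          ext t
          by_cases ht : t ∈ Ioo (0:ℝ) (1 - ∑ i, v i)
          · rw [indicator_of_mem (show ((t,v) : ℝ × (Fin k → ℝ)) ∈ S from ⟨hv, ht⟩),
              indicator_of_mem ht]
          · rw [indicator_of_notMem (show ((t,v) : ℝ × (Fin k → ℝ)) ∉ S from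
              fun h => ht h.2), indicator_of_notMem ht]
        · rw [indicator_of_notMem hv]
          have : ∀ t : ℝ, S.indicator (fun p => F (e.symm p)) (t, v) = 0 := fun t =>
            indicator_of_notMem (fun h => hv h.1) _
          simp only [this, lintegral_zero]
      simp only [inner_eq]
      rw [lintegral_indicator (measurableSet_simplexE k)]
      -- now compute inner integral on simplexE k
      have hc0 : 0 < c 0 := hc 0
      set B : ℝ := Real.Gamma (c 0) * Real.Gamma d / Real.Gamma (c 0 + d) with hB
      have hBpos : 0 < B := by
        apply div_pos (mul_pos (Real.Gamma_pos_of_pos hc0) (Real.Gamma_pos_of_pos hd))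
          (Real.Gamma_pos_of_pos (by linarith))
      have key : ∀ v ∈ simplexE k,
          (∫⁻ t in Ioo 0 (1 - ∑ i, v i), F (e.symm (t, v)))
            = ENNReal.ofReal B * ENNReal.ofReal
                ((∏ j, v j ^ (c j.succ - 1)) * (1 - ∑ i, v i) ^ ((c 0 + d) - 1)) := by
        intro v hv
        have hL : 0 < 1 - ∑ i, v i := by
          have := hv.2; linarith [hv.2]
        have hP : 0 ≤ ∏ j, v j ^ (c j.succ - 1) :=
          Finset.prod_nonneg fun j _ => Real.rpow_nonneg (hv.1 j).le _
        have heq : ∀ t ∈ Ioo (0:ℝ) (1 - ∑ i, v i), F (e.symm (t, v))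
            = ENNReal.ofReal (∏ j, v j ^ (c j.succ - 1)) *
              ENNReal.ofReal (t ^ (c 0 - 1) * ((1 - ∑ i, v i) - t) ^ (d - 1)) := by
          intro t ht
          rw [hsymm, hF]
          simp only [Fin.prod_univ_succ, Fin.sum_univ_succ, Fin.cons_zero, Fin.cons_succ]
          rw [← ENNReal.ofReal_mul hP]
          congr 1
          rw [show (1 : ℝ) - (t + ∑ i, v i) = (1 - ∑ i, v i) - t by ring]
          ring
        rw [setLIntegral_congr_fun measurableSet_Ioo heq,
          lintegral_const_mul' _ _ ENNReal.ofReal_ne_top,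
          beta_lintegral_scaled hc0 hd hL, ← ENNReal.ofReal_mul hP]
        rw [show ENNReal.ofReal B * ENNReal.ofReal
            ((∏ j, v j ^ (c j.succ - 1)) * (1 - ∑ i, v i) ^ ((c 0 + d) - 1))
          = ENNReal.ofReal (B * ((∏ j, v j ^ (c j.succ - 1)) *
              (1 - ∑ i, v i) ^ ((c 0 + d) - 1))) from
          (ENNReal.ofReal_mul hBpos.le).symm]
        congr 1
        ring
      rw [setLIntegral_congr_fun (measurableSet_simplexE k)
        key]
      rw [lintegral_const_mul' _ _ ENNReal.ofReal_ne_top]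
      rw [ih (fun j : Fin k => c j.succ) (fun j : Fin k => hc j.succ) (by linarith : (0:ℝ) < c 0 + d)]
      rw [← ENNReal.ofReal_mul hBpos.le]
      congr 1
      have hGcd : Real.Gamma (c 0 + d) ≠ 0 := (Real.Gamma_pos_of_pos (by linarith)).ne'
      have hsum : ∑ j : Fin k, c j.succ + (c 0 + d) = ∑ i, c i + d := by
        rw [Fin.sum_univ_succ]; ring
      rw [hsum, Fin.prod_univ_succ, hB]
      have hGsum : Real.Gamma (∑ i, c i + d) ≠ 0 :=
        (Real.Gamma_pos_of_pos (add_pos_of_nonneg_of_pos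
          (Finset.sum_nonneg fun i _ => (hc i).le) hd)).ne'
      field_simp


lemma measurable_dirF_real (k : ℕ) (c : Fin k → ℝ) (d : ℝ) :
    Measurable fun u : Fin k → ℝ =>
      (∏ i, u i ^ (c i - 1)) * (1 - ∑ i, u i) ^ (d - 1) :=
  (Finset.measurable_prod _ fun i _ =>
    (measurable_rpow_const (c i - 1)).comp (measurable_pi_apply i)).mul
    ((measurable_rpow_const (d - 1)).comp
      (measurable_const.sub (Finset.measurable_sum _ fun i _ => measurable_pi_apply i)))

lemma dirF_nonneg {k : ℕ} (c : Fin k → ℝ) (d : ℝ) :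
    ∀ᵐ u ∂(volume.restrict (simplexE k)),
      0 ≤ (∏ i, u i ^ (c i - 1)) * (1 - ∑ i, u i) ^ (d - 1) := by
  refine (ae_restrict_iff' (measurableSet_simplexE k)).2 (Filter.Eventually.of_forall
    (fun u hu => ?_))
  have h1 : 0 ≤ ∏ i, u i ^ (c i - 1) :=
    Finset.prod_nonneg fun i _ => Real.rpow_nonneg (hu.1 i).le _
  have h2 : 0 ≤ (1 - ∑ i, u i) ^ (d - 1) := Real.rpow_nonneg (by linarith [hu.2]) _
  exact mul_nonneg h1 h2

lemma dirichlet_integrableOn {k : ℕ} (c : Fin k → ℝ) (hc : ∀ i, 0 < c i) {d : ℝ} (hd : 0 < d) :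
    IntegrableOn (fun u : Fin k → ℝ =>
      (∏ i, u i ^ (c i - 1)) * (1 - ∑ i, u i) ^ (d - 1)) (simplexE k) := by
  refine ⟨(measurable_dirF_real k c d).aestronglyMeasurable, ?_⟩
  rw [hasFiniteIntegral_iff_ofReal (dirF_nonneg c d)]
  rw [dirichlet_lintegral c hc hd]
  exact ENNReal.ofReal_lt_top

lemma dirichlet_integral {k : ℕ} (c : Fin k → ℝ) (hc : ∀ i, 0 < c i) {d : ℝ} (hd : 0 < d) :
    ∫ u in simplexE k, (∏ i, u i ^ (c i - 1)) * (1 - ∑ i, u i) ^ (d - 1)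
      = (∏ i, Real.Gamma (c i)) * Real.Gamma d / Real.Gamma (∑ i, c i + d) := by
  rw [integral_eq_lintegral_of_nonneg_ae (dirF_nonneg c d)
    (measurable_dirF_real k c d).aestronglyMeasurable]
  rw [dirichlet_lintegral c hc hd, ENNReal.toReal_ofReal]
  have h1 : 0 < ∏ i, Real.Gamma (c i) :=
    Finset.prod_pos fun i _ => Real.Gamma_pos_of_pos (hc i)
  have h2 : 0 < Real.Gamma d := Real.Gamma_pos_of_pos hd
  have h3 : 0 < Real.Gamma (∑ i, c i + d) := Real.Gamma_pos_of_pos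
    (add_pos_of_nonneg_of_pos (Finset.sum_nonneg fun i _ => (hc i).le) hd)
  positivity

noncomputable def gAux (a : ℝ) (nn : ℕ) (xx : ℝ) (m : ℕ) : ℝ :=
  risingFactorial (a + 1) nn / (Nat.factorial nn : ℝ)
    * (risingFactorial (-(nn : ℝ)) m / risingFactorial (a + 1) m * xx ^ m
        / (Nat.factorial m : ℝ))

/-- The Srivastava–Niukkanen integral representation for Erdélyi's multivariate
Laguerre polynomials. -/
theorem mvLaguerre_eq_integral (k : ℕ) (hk : 1 ≤ k) (α : Fin k → ℝ) (hα : ∀ i, -1 < α i)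
    (β : ℝ) (hβ : -1 < β) (n : Fin k → ℕ) (x : Fin k → ℝ) :
    mvLaguerre k (∑ i, α i + β + k) n x =
      risingFactorial (∑ i, α i + β + k + 1) (∑ i, n i) /
          (∏ i, risingFactorial (α i + 1) (n i)) *
        ∫ u in simplexE k, (∏ j, laguerreP (n j) (α j) (x j * u j)) *
          dirichletDensity k (fun i => α i + 1) (β + 1) u := by
  classical
  have hβ1 : 0 < β + 1 := by linarith
  have hαp : ∀ i, 0 < α i + 1 := fun i => by linarith [hα i]
  have hsumA : ∑ i, (α i + 1) + (β + 1) = ∑ i, α i + β + (k:ℝ) + 1 := by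
    rw [Finset.sum_add_distrib, Finset.sum_const, Finset.card_univ, Fintype.card_fin]
    push_cast; ring
  have hA1pos : 0 < ∑ i, α i + β + (k:ℝ) + 1 := by
    rw [← hsumA]
    exact add_pos_of_nonneg_of_pos (Finset.sum_nonneg fun i _ => (hαp i).le) hβ1
  set P := Fintype.piFinset (fun i : Fin k => Finset.range (n i + 1)) with hP
  set D := dirichletDensity k (fun i => α i + 1) (β + 1) with hD
  set CΓ : ℝ := Real.Gamma (∑ i, (α i + 1) + (β + 1)) /
    ((∏ i, Real.Gamma (α i + 1)) * Real.Gamma (β + 1)) with hCΓ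
  have hg : ∀ i m, gAux (α i) (n i) (x i) m = risingFactorial (α i + 1) (n i)
      / (Nat.factorial (n i) : ℝ)
    * (risingFactorial (-(n i : ℝ)) m / risingFactorial (α i + 1) m * x i ^ m
        / (Nat.factorial m : ℝ)) := fun i m => rfl
  have hLag : ∀ u : Fin k → ℝ, ∀ j, laguerreP (n j) (α j) (x j * u j)
      = ∑ m ∈ Finset.range (n j + 1), gAux (α j) (n j) (x j) m * u j ^ m := by
    intro u j
    rw [laguerreP, Finset.mul_sum]
    refine Finset.sum_congr rfl fun m _ => ?_
    rw [hg, mul_pow]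
    ring
  have hexp : ∀ u : Fin k → ℝ,
      (∏ j, laguerreP (n j) (α j) (x j * u j)) * D u
        = ∑ m ∈ P, (∏ i, gAux (α i) (n i) (x i) (m i)) * ((∏ i, (u i : ℝ) ^ (m i)) * D u) := by
    intro u
    rw [Finset.prod_congr rfl fun j _ => hLag u j, Finset.prod_univ_sum, Finset.sum_mul]
    refine Finset.sum_congr rfl fun m _ => ?_
    rw [Finset.prod_mul_distrib]
    ring
  have hcm : ∀ m : Fin k → ℕ, ∀ i, 0 < α i + 1 + (m i : ℝ) :=
    fun m i => add_pos_of_pos_of_nonneg (hαp i) (Nat.cast_nonneg _)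
  have hEq : ∀ m : Fin k → ℕ, EqOn
      (fun u : Fin k → ℝ => ((∏ i, gAux (α i) (n i) (x i) (m i)) * CΓ) *
        ((∏ i, u i ^ (α i + 1 + (m i : ℝ) - 1)) * (1 - ∑ i, u i) ^ (β + 1 - 1)))
      (fun u : Fin k → ℝ => (∏ i, gAux (α i) (n i) (x i) (m i)) * ((∏ i, (u i : ℝ) ^ (m i)) * D u))
      (simplexE k) := by
    intro m u hu
    simp only
    have hfac : ∀ i, u i ^ (α i + 1 + (m i : ℝ) - 1)
        = (u i : ℝ) ^ (m i) * u i ^ (α i + 1 - 1) := by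
      intro i
      rw [← Real.rpow_natCast (u i) (m i), ← Real.rpow_add (hu.1 i)]
      congr 1; ring
    rw [Finset.prod_congr rfl fun i _ => hfac i, Finset.prod_mul_distrib]
    simp only [hD, dirichletDensity, ← hCΓ]
    ring
  have hint : ∀ m ∈ P, IntegrableOn
      (fun u : Fin k → ℝ => (∏ i, gAux (α i) (n i) (x i) (m i)) * ((∏ i, (u i : ℝ) ^ (m i)) * D u))
      (simplexE k) volume := by
    intro m _
    exact IntegrableOn.congr_fun
      ((dirichlet_integrableOn (fun i => α i + 1 + (m i : ℝ)) (hcm m) hβ1).const_mul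
        ((∏ i, gAux (α i) (n i) (x i) (m i)) * CΓ)) (hEq m) (measurableSet_simplexE k)
  have hval : ∀ m ∈ P, ∫ u in simplexE k,
        (∏ i, gAux (α i) (n i) (x i) (m i)) * ((∏ i, (u i : ℝ) ^ (m i)) * D u)
      = ((∏ i, gAux (α i) (n i) (x i) (m i)) * CΓ) * ((∏ i, Real.Gamma (α i + 1 + (m i : ℝ)))
          * Real.Gamma (β + 1) / Real.Gamma (∑ i, (α i + 1 + (m i : ℝ)) + (β + 1))) := by
    intro m _
    rw [← setIntegral_congr_fun (measurableSet_simplexE k) (hEq m), integral_const_mul]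
    congr 1
    exact dirichlet_integral (fun i => α i + 1 + (m i : ℝ)) (hcm m) hβ1
  have hIntEq : ∫ u in simplexE k, (∏ j, laguerreP (n j) (α j) (x j * u j)) * D u
      = ∑ m ∈ P, ((∏ i, gAux (α i) (n i) (x i) (m i)) * CΓ) * ((∏ i, Real.Gamma (α i + 1 + (m i : ℝ)))
          * Real.Gamma (β + 1) / Real.Gamma (∑ i, (α i + 1 + (m i : ℝ)) + (β + 1))) := by
    rw [show (fun u : Fin k → ℝ => (∏ j, laguerreP (n j) (α j) (x j * u j)) * D u)
        = fun u => ∑ m ∈ P, (∏ i, gAux (α i) (n i) (x i) (m i)) * ((∏ i, (u i : ℝ) ^ (m i)) * D u) from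
      funext hexp]
    rw [integral_finset_sum P hint]
    exact Finset.sum_congr rfl hval
  rw [hIntEq, mvLaguerre, ← hP, Finset.mul_sum, Finset.mul_sum]
  refine Finset.sum_congr rfl fun m hm => ?_
  -- per-term algebra
  have hΓβ : 0 < Real.Gamma (β + 1) := Real.Gamma_pos_of_pos hβ1
  have hΓα : ∀ i, 0 < Real.Gamma (α i + 1) := fun i => Real.Gamma_pos_of_pos (hαp i)
  have hΓA : 0 < Real.Gamma (∑ i, α i + β + (k:ℝ) + 1) := Real.Gamma_pos_of_pos hA1pos
  have hrn : ∀ i, 0 < risingFactorial (α i + 1) (n i) := fun i => risingFactorial_pos (hαp i) _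
  have hrm : ∀ i, 0 < risingFactorial (α i + 1) (m i) := fun i => risingFactorial_pos (hαp i) _
  have hrA : 0 < risingFactorial (∑ i, α i + β + (k:ℝ) + 1) (∑ i, m i) :=
    risingFactorial_pos hA1pos _
  have hg1 : ∀ i, Real.Gamma (α i + 1 + (m i : ℝ))
      = Real.Gamma (α i + 1) * risingFactorial (α i + 1) (m i) :=
    fun i => Gamma_add_nat (hαp i) (m i)
  have hg2 : Real.Gamma (∑ i, (α i + 1 + (m i : ℝ)) + (β + 1))
      = Real.Gamma (∑ i, α i + β + (k:ℝ) + 1) *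
          risingFactorial (∑ i, α i + β + (k:ℝ) + 1) (∑ i, m i) := by
    have harg : ∑ i, (α i + 1 + (m i : ℝ)) + (β + 1)
        = (∑ i, α i + β + (k:ℝ) + 1) + ((∑ i, m i : ℕ) : ℝ) := by
      rw [Finset.sum_add_distrib, Finset.sum_add_distrib, Finset.sum_const,
        Finset.card_univ, Fintype.card_fin]
      push_cast; ring
    rw [harg, Gamma_add_nat hA1pos]
  have hgi : ∀ i, gAux (α i) (n i) (x i) (m i) = (risingFactorial (α i + 1) (n i) *
        (risingFactorial (-(n i : ℝ)) (m i) * x i ^ (m i)))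
      / ((Nat.factorial (n i) : ℝ) * (risingFactorial (α i + 1) (m i)
          * (Nat.factorial (m i) : ℝ))) := by
    intro i
    rw [hg]
    have h1 : (Nat.factorial (n i) : ℝ) ≠ 0 := Nat.cast_ne_zero.2 (Nat.factorial_ne_zero _)
    have h2 : risingFactorial (α i + 1) (m i) ≠ 0 := (hrm i).ne'
    have h3 : (Nat.factorial (m i) : ℝ) ≠ 0 := Nat.cast_ne_zero.2 (Nat.factorial_ne_zero _)
    field_simp
    try ring
  rw [hCΓ, hsumA, hg2]
  rw [Finset.prod_congr rfl fun i _ => hgi i, Finset.prod_congr rfl fun i _ => hg1 i]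
  simp only [Finset.prod_div_distrib, Finset.prod_mul_distrib]
  have hnf : (0:ℝ) < ∏ i, (Nat.factorial (n i) : ℝ) :=
    Finset.prod_pos fun i _ => Nat.cast_pos.2 (Nat.factorial_pos _)
  have hmf : (0:ℝ) < ∏ i, (Nat.factorial (m i) : ℝ) :=
    Finset.prod_pos fun i _ => Nat.cast_pos.2 (Nat.factorial_pos _)
  have hrnp : (0:ℝ) < ∏ i, risingFactorial (α i + 1) (n i) :=
    Finset.prod_pos fun i _ => hrn i
  have hrmp : (0:ℝ) < ∏ i, risingFactorial (α i + 1) (m i) :=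
    Finset.prod_pos fun i _ => hrm i
  have hΓαp : (0:ℝ) < ∏ i, Real.Gamma (α i + 1) := Finset.prod_pos fun i _ => hΓα i
  field_simp
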